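/- Let β < 0, γ > 0, set x_R = 2/(γ + √(γ² − 4β)), and let Π : [0, x_R) → ℝ be a Poincaré half-map datum on [0, x_R). Let B, α, δ ∈ ℝ with B > δ > 0, α < 0 and x* = −(B−δ)/α = x_R, and assume X^sl(u) > 0 for all u ∈ [Π(x), x] and all x ∈ [0, x_R). Then Ĩ(x) = ∫_{Π(x)}^{x} u/X^sl(u) du > 0 for all x ∈ (0, x_R). -/

import Mathlib

/-- `V(x) = βx² − γx + 1`. -/
def Vq (β γ x : ℝ) : ℝ := β * x ^ 2 - γ * x + 1

/-- The sliding vector field `X^sl(x) = (B − δ + αx)/(1 + δ)`. -/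
noncomputable def Xsl (B α δ x : ℝ) : ℝ := (B - δ + α * x) / (1 + δ)

/-- The slow divergence integral (up to a positive constant)
`Ĩ(x) = ∫_{P x}^{x} u / X^sl(u) du`. -/
noncomputable def Itil (B α δ : ℝ) (P : ℝ → ℝ) (x : ℝ) : ℝ :=
  ∫ u in (P x)..x, u / Xsl B α δ u

/-- Theorem 3.3, Statement 4 (saddle case, `x* = x_R`): for `β < 0`, `γ > 0`,
`x_R = 2/(γ + √(γ² − 4β))`, a Poincaré half-map datum on `[0, x_R)`, `B > δ > 0`,
`α < 0` and `x* = −(B−δ)/α = x_R`, the slow divergence integral is positive on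
`(0, x_R)`. -/
theorem slow_divergence_integral_positive_saddle (β γ B α δ xR : ℝ)
    (hβ : β < 0) (hγ : 0 < γ)
    (hxR : xR = 2 / (γ + Real.sqrt (γ ^ 2 - 4 * β)))
    (P : ℝ → ℝ)
    (hdiff : DifferentiableOn ℝ P (Set.Ico 0 xR))
    (hP0 : P 0 = 0)
    (hPneg : ∀ x ∈ Set.Ioo 0 xR, P x < 0)
    (hV : ∀ x ∈ Set.Ioo 0 xR, ∀ u ∈ Set.Icc (P x) x, Vq β γ u > 0)
    (hint : ∀ x ∈ Set.Ioo 0 xR, ∫ u in (P x)..x, u / Vq β γ u = 0)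
    (hBδ : B > δ) (hδ : δ > 0) (hα : α < 0)
    (hxstar : -(B - δ) / α = xR)
    (hXsl : ∀ x ∈ Set.Ico 0 xR, ∀ u ∈ Set.Icc (P x) x, Xsl B α δ u > 0) :
    ∀ x ∈ Set.Ioo 0 xR, Itil B α δ P x > 0 := by
  intro x hx
  obtain ⟨hx0, hxxR⟩ := hx
  have hPx : P x < 0 := hPneg x ⟨hx0, hxxR⟩
  have hPxx : P x < x := hPx.trans hx0
  set s := Real.sqrt (γ ^ 2 - 4 * β) with hs_def
  have hdisc : (0:ℝ) < γ ^ 2 - 4 * β := by nlinarith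
  have hs2 : s ^ 2 = γ ^ 2 - 4 * β := Real.sq_sqrt hdisc.le
  have hs_nonneg : 0 ≤ s := Real.sqrt_nonneg _
  have hγs : 0 < γ + s := by linarith
  have hα' : α ≠ 0 := ne_of_lt hα
  have hδ1 : (0:ℝ) < 1 + δ := by linarith
  have hBδ2 : B - δ = -(α * (2 / (γ + s))) := by
    rw [div_eq_iff hα'] at hxstar
    rw [← hxR]; linarith
  set c : ℝ := -(1 + δ) * (γ + s) / (2 * α) with hc_def
  set K : ℝ := (1 + δ) * β / α with hK_def
  have hK : 0 < K := div_pos_of_neg_of_neg (by nlinarith) hα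
  -- key factorization
  have hident : ∀ u : ℝ, Vq β γ u = Xsl B α δ u * (c + K * u) := by
    intro u
    unfold Vq Xsl
    rw [hBδ2, hc_def, hK_def]
    field_simp
    linear_combination u * hs2
  have hIccmem : ∀ u ∈ Set.Icc (P x) x, Vq β γ u > 0 ∧ Xsl B α δ u > 0 := by
    intro u hu
    exact ⟨hV x ⟨hx0, hxxR⟩ u hu, hXsl x ⟨le_of_lt hx0, hxxR⟩ u hu⟩
  have huIcc : Set.uIcc (P x) x = Set.Icc (P x) x := Set.uIcc_of_le hPxx.le
  -- pointwise decomposition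
  have heq : ∀ u ∈ Set.Icc (P x) x,
      u / Xsl B α δ u = c * (u / Vq β γ u) + K * (u ^ 2 / Vq β γ u) := by
    intro u hu
    obtain ⟨hVu, hXu⟩ := hIccmem u hu
    have hcK : 0 < c + K * u := by
      have h := hident u
      nlinarith
    rw [hident u]
    have hre : c * (u / (Xsl B α δ u * (c + K * u))) + K * (u ^ 2 / (Xsl B α δ u * (c + K * u)))
        = u * (c + K * u) / (Xsl B α δ u * (c + K * u)) := by ring
    rw [hre, mul_div_mul_right _ _ hcK.ne']
  -- continuity and integrability
  have hVcont : Continuous (Vq β γ) := by unfold Vq; fun_prop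
  have hVne : ∀ u ∈ Set.uIcc (P x) x, Vq β γ u ≠ 0 := by
    intro u hu
    rw [huIcc] at hu
    exact ne_of_gt (hIccmem u hu).1
  have hi1 : IntervalIntegrable (fun u => u / Vq β γ u) MeasureTheory.volume (P x) x := by
    apply ContinuousOn.intervalIntegrable
    exact ContinuousOn.div continuousOn_id hVcont.continuousOn hVne
  have hi2 : IntervalIntegrable (fun u => u ^ 2 / Vq β γ u) MeasureTheory.volume (P x) x := by
    apply ContinuousOn.intervalIntegrable
    exact ContinuousOn.div (continuousOn_id.pow 2) hVcont.continuousOn hVne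
  have hItil : Itil B α δ P x =
      ∫ u in (P x)..x, (c * (u / Vq β γ u) + K * (u ^ 2 / Vq β γ u)) := by
    unfold Itil
    apply intervalIntegral.integral_congr
    intro u hu
    rw [huIcc] at hu
    exact heq u hu
  rw [hItil, intervalIntegral.integral_add (hi1.const_mul c) (hi2.const_mul K),
    intervalIntegral.integral_const_mul, intervalIntegral.integral_const_mul,
    hint x ⟨hx0, hxxR⟩, mul_zero, zero_add]
  -- positivity of ∫ u²/V
  have hsub1 : IntervalIntegrable (fun u => u ^ 2 / Vq β γ u) MeasureTheory.volume (P x) 0 := by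
    apply hi2.mono_set
    rw [huIcc, Set.uIcc_of_le hPx.le]
    exact Set.Icc_subset_Icc le_rfl hx0.le
  have hsub2 : IntervalIntegrable (fun u => u ^ 2 / Vq β γ u) MeasureTheory.volume 0 x := by
    apply hi2.mono_set
    rw [huIcc, Set.uIcc_of_le hx0.le]
    exact Set.Icc_subset_Icc hPx.le le_rfl
  have hpos1 : 0 < ∫ u in (P x)..(0:ℝ), u ^ 2 / Vq β γ u := by
    apply intervalIntegral.intervalIntegral_pos_of_pos_on hsub1 _ hPx
    intro u hu
    have hu' : u ∈ Set.Icc (P x) x := ⟨hu.1.le, hu.2.le.trans hx0.le⟩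
    exact div_pos (by nlinarith [hu.2] : (0:ℝ) < u ^ 2) (hIccmem u hu').1
  have hpos2 : 0 < ∫ u in (0:ℝ)..x, u ^ 2 / Vq β γ u := by
    apply intervalIntegral.intervalIntegral_pos_of_pos_on hsub2 _ hx0
    intro u hu
    have hu' : u ∈ Set.Icc (P x) x := ⟨hPx.le.trans hu.1.le, hu.2.le⟩
    exact div_pos (by nlinarith [hu.1] : (0:ℝ) < u ^ 2) (hIccmem u hu').1
  have hsplit : (∫ u in (P x)..(0:ℝ), u ^ 2 / Vq β γ u) + ∫ u in (0:ℝ)..x, u ^ 2 / Vq β γ u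
      = ∫ u in (P x)..x, u ^ 2 / Vq β γ u :=
    intervalIntegral.integral_add_adjacent_intervals hsub1 hsub2
  have : 0 < ∫ u in (P x)..x, u ^ 2 / Vq β γ u := by linarith [hsplit, hpos1, hpos2]
  exact mul_pos hK this
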